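/- In the discrete strip setup with μ = 0 (cylindrical case), assume s₁·s₂·s₃ ≠ 0, t₁·t₂·t₃ ≠ 0, (t₁ − t₂)·(t₁ + t₂)·(t₁·t₂ − 1)·(t₁·t₂ + 1) ≠ 0, (t₁ − t₃)·(t₁ + t₃)·(t₁·t₃ − 1)·(t₁·t₃ + 1) ≠ 0 and (s₁ − s₃)·(s₁ + s₃)·(s₁·s₃ − 1)·(s₁·s₃ + 1) ≠ 0. If for every δ₂ ∈ (−π, π) there exists δ₁ ∈ (−π, π) with D₁(δ₁, δ₂) = 0 and D₂(δ₁, δ₂) = 0, then R₂ = 0 and R₃ = 0, where Rᵢ := s₁²sᵢt₁tᵢ² − s₁sᵢ²t₁²tᵢ − s₁²sᵢt₁ + s₁sᵢ²tᵢ + s₁t₁²tᵢ − sᵢt₁tᵢ² − s₁tᵢ + sᵢt₁ for i ∈ {2, 3}. -/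

import Mathlib

open Real Matrix

noncomputable section

/-- Rotation matrix about the `x`-axis by angle `δ`. -/
def rotX (δ : ℝ) : Matrix (Fin 3) (Fin 3) ℝ :=
  !![1, 0, 0;
     0, Real.cos δ, -Real.sin δ;
     0, Real.sin δ, Real.cos δ]

/-- Rotation matrix by angle `δ` about the line through the origin with direction
`(cos μ, sin μ, 0)`. -/
def rotAxis (μ δ : ℝ) : Matrix (Fin 3) (Fin 3) ℝ :=
  !![(1 - Real.cos μ ^ 2) * Real.cos δ + Real.cos μ ^ 2,
       Real.cos μ * Real.sin μ * (1 - Real.cos δ),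
       Real.sin μ * Real.sin δ;
     Real.cos μ * Real.sin μ * (1 - Real.cos δ),
       (1 - Real.sin μ ^ 2) * Real.cos δ + Real.sin μ ^ 2,
       -(Real.cos μ * Real.sin δ);
     -(Real.sin μ * Real.sin δ),
       Real.cos μ * Real.sin δ,
       Real.cos δ]

/-- The unit vector `(cos θ, sin θ, 0)` in the `xy`-plane. -/
def dirVec (θ : ℝ) : Fin 3 → ℝ := ![Real.cos θ, Real.sin θ, 0]

/-- Coplanarity determinant of the three cut edge directions `R₁·(cos θ₁, sin θ₁, 0)`,
`(cos θ₂, sin θ₂, 0)`, `R₂·(cos (μ+θ₃), sin (μ+θ₃), 0)`. -/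
def Ddet (μ δ₁ δ₂ θ₁ θ₂ θ₃ : ℝ) : ℝ :=
  Matrix.det (Matrix.of
    ![(rotX δ₁).mulVec (dirVec θ₁),
      dirVec θ₂,
      (rotAxis μ δ₂).mulVec (dirVec (μ + θ₃))])

/-- Half-angle substitution. -/
lemma half_aux (θ x : ℝ) (hx : x = Real.tan (θ/2)) (hne : x ≠ 0) :
    Real.sin θ = 2*x/(1+x^2) ∧ Real.cos θ = (1-x^2)/(1+x^2) ∧ Real.sin θ ≠ 0 := by
  have hc : Real.cos (θ/2) ≠ 0 := by
    intro h
    exact hne (by rw [hx, Real.tan_eq_sin_div_cos, h, div_zero])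
  have hsc : Real.sin (θ/2) = x * Real.cos (θ/2) := by
    rw [hx, Real.tan_eq_sin_div_cos]; field_simp
  have h1x : (1:ℝ) + x^2 ≠ 0 := by positivity
  have hpy : Real.sin (θ/2)^2 + Real.cos (θ/2)^2 = 1 := Real.sin_sq_add_cos_sq _
  have hk : (1 + x^2) * Real.cos (θ/2)^2 = 1 := by
    linear_combination hpy - (Real.sin (θ/2) + x*Real.cos (θ/2)) * hsc
  have hsin : Real.sin θ = 2*x/(1+x^2) := by
    have h2 : Real.sin θ = 2 * x * Real.cos (θ/2)^2 := by
      conv_lhs => rw [show θ = 2*(θ/2) by ring]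
      rw [Real.sin_two_mul, hsc]; ring
    rw [h2]
    field_simp
    linear_combination hk
  refine ⟨hsin, ?_, ?_⟩
  · have h2 : Real.cos θ = (1 - x^2) * Real.cos (θ/2)^2 := by
      conv_lhs => rw [show θ = 2*(θ/2) by ring]
      rw [Real.cos_two_mul]
      linear_combination hk
    rw [h2]
    field_simp
    linear_combination (1-x^2)*hk
  · rw [hsin]
    exact div_ne_zero (by simpa using hne) h1x

/-- Explicit form of the determinant in the cylindrical case. -/
lemma Ddet_eq (δ₁ δ₂ θ₁ θ₂ θ₃ : ℝ) :
    Ddet 0 δ₁ δ₂ θ₁ θ₂ θ₃ =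
      (Real.cos θ₁ * Real.sin θ₂ * Real.sin θ₃) * Real.sin δ₂
      - (Real.sin θ₁ * Real.cos θ₂ * Real.sin θ₃) * Real.cos δ₁ * Real.sin δ₂
      + (Real.sin θ₁ * Real.cos θ₂ * Real.sin θ₃) * Real.sin δ₁ * Real.cos δ₂
      - (Real.sin θ₁ * Real.sin θ₂ * Real.cos θ₃) * Real.sin δ₁ := by
  simp [Ddet, rotX, rotAxis, dirVec, Matrix.det_fin_three, Matrix.mulVec,
    dotProduct, Fin.sum_univ_three]
  ring

/-- Elimination of `δ₁` from the two coplanarity conditions. -/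
lemma elim_aux (a b e a' b' e' x y c s : ℝ) (hs : s ≠ 0)
    (hxy : x ^ 2 + y ^ 2 = 1) (hcs : s ^ 2 = 1 - c ^ 2)
    (h1 : a * s - b * x * s + b * y * c - e * y = 0)
    (h2 : a' * s - b' * x * s + b' * y * c - e' * y = 0) :
    (a * b' - a' * b) ^ 2 + (e * a' - e' * a) ^ 2
      + 2 * (a * b' - a' * b) * (e * a' - e' * a) * c
      = (e * b' - b * e') ^ 2 := by
  have h3 : (e * b' - b * e') * y = (a * b' - a' * b) * s := by
    linear_combination b * h2 - b' * h1
  have h4 : ((e * b' - b * e') * x) * s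
      = ((e * a' - e' * a) + (a * b' - a' * b) * c) * s := by
    linear_combination e' * h1 - e * h2 + c * h3
  have h5 : (e * b' - b * e') * x = (e * a' - e' * a) + (a * b' - a' * b) * c :=
    mul_right_cancel₀ hs h4
  linear_combination (e*b'-b*e')^2 * hxy
    - ((e*b'-b*e')*x + (e*a'-e'*a) + (a*b'-a'*b)*c) * h5
    - (a*b'-a'*b)^2 * hcs
    - ((e*b'-b*e')*y + (a*b'-a'*b)*s) * h3

/-- Key cancellation step. -/
lemma cancel_aux (c1 s1 C1 S1 c2 s2 C2 S2 X Y v w : ℝ)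
    (hv : v = C1*s1*X - c1*S1*Y)
    (hw : w = C2*s2*X - c2*S2*Y)
    (hu : c1*s2*S1*C2 - s1*c2*C1*S2 = 0)
    (hvw : (s2*S2*v)^2 = (s1*S1*w)^2)
    (h1 : s1 ≠ 0) (h2 : s2 ≠ 0)
    (hp : C1*S2 + C2*S1 ≠ 0) (hm : C1*S2 - C2*S1 ≠ 0) : v = 0 := by
  subst hv hw
  have hsplit : (s2*S2*(C1*s1*X - c1*S1*Y) - s1*S1*(C2*s2*X - c2*S2*Y))
      * (s2*S2*(C1*s1*X - c1*S1*Y) + s1*S1*(C2*s2*X - c2*S2*Y)) = 0 := by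
    linear_combination hvw
  rcases mul_eq_zero.mp hsplit with h | h
  · have hz : (s1*s2*(C1*S2 - C2*S1)) * (C1*s1*X - c1*S1*Y) = 0 := by
      linear_combination C1*s1*h + s1*S1*Y*hu
    exact (mul_eq_zero.mp hz).resolve_left
      (mul_ne_zero (mul_ne_zero h1 h2) hm)
  · have hz : (s1*s2*(C1*S2 + C2*S1)) * (C1*s1*X - c1*S1*Y) = 0 := by
      linear_combination C1*s1*h - s1*S1*Y*hu
    exact (mul_eq_zero.mp hz).resolve_left
      (mul_ne_zero (mul_ne_zero h1 h2) hp)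

/-- Nondegeneracy in half-angle form. -/
lemma nd_aux (α β u w : ℝ)
    (hsa : Real.sin α = 2*u/(1+u^2)) (hca : Real.cos α = (1-u^2)/(1+u^2))
    (hsb : Real.sin β = 2*w/(1+w^2)) (hcb : Real.cos β = (1-w^2)/(1+w^2))
    (h : (u - w) * (u + w) * (u*w - 1) * (u*w + 1) ≠ 0) :
    Real.cos α * Real.sin β - Real.cos β * Real.sin α ≠ 0 ∧
    Real.cos α * Real.sin β + Real.cos β * Real.sin α ≠ 0 := by
  have hA : u - w ≠ 0 := fun hh => h (by rw [hh]; ring)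
  have hB : u + w ≠ 0 := fun hh => h (by rw [hh]; ring)
  have hC : u*w - 1 ≠ 0 := fun hh => h (by rw [hh]; ring)
  have hD : u*w + 1 ≠ 0 := fun hh => h (by rw [hh]; ring)
  have d1 : (1:ℝ) + u^2 ≠ 0 := by positivity
  have d2 : (1:ℝ) + w^2 ≠ 0 := by positivity
  constructor
  · have key : Real.cos α * Real.sin β - Real.cos β * Real.sin α
        = 2*((w-u)*(1+u*w))/((1+u^2)*(1+w^2)) := by
      rw [hca, hsb, hcb, hsa]; field_simp; ring
    rw [key]
    exact div_ne_zero (mul_ne_zero two_ne_zero (mul_ne_zero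
      (fun hh => hA (by linarith)) (fun hh => hD (by linarith))))
      (mul_ne_zero d1 d2)
  · have key : Real.cos α * Real.sin β + Real.cos β * Real.sin α
        = 2*((u+w)*(1-u*w))/((1+u^2)*(1+w^2)) := by
      rw [hca, hsb, hcb, hsa]; field_simp; ring
    rw [key]
    exact div_ne_zero (mul_ne_zero two_ne_zero (mul_ne_zero hB
      (fun hh => hC (by linarith))))
      (mul_ne_zero d1 d2)

/-- In the cylindrical case `μ = 0`: if the discrete strip admits a
one-parametric isometric deformation keeping both triples of cut edges coplanar, then
(under the stated nondegeneracy assumptions) `R₂ = 0` and `R₃ = 0`. -/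
theorem discrete_cylinder_necessary_condition
    (σ₁ σ₂ σ₃ τ₁ τ₂ τ₃ s₁ s₂ s₃ t₁ t₂ t₃ : ℝ)
    (hs₁ : s₁ = Real.tan (σ₁ / 2)) (hs₂ : s₂ = Real.tan (σ₂ / 2))
    (hs₃ : s₃ = Real.tan (σ₃ / 2))
    (ht₁ : t₁ = Real.tan (τ₁ / 2)) (ht₂ : t₂ = Real.tan (τ₂ / 2))
    (ht₃ : t₃ = Real.tan (τ₃ / 2))
    (hs0 : s₁ * s₂ * s₃ ≠ 0) (ht0 : t₁ * t₂ * t₃ ≠ 0)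
    (ht₁₂ : (t₁ - t₂) * (t₁ + t₂) * (t₁ * t₂ - 1) * (t₁ * t₂ + 1) ≠ 0)
    (ht₁₃ : (t₁ - t₃) * (t₁ + t₃) * (t₁ * t₃ - 1) * (t₁ * t₃ + 1) ≠ 0)
    (hs₁₃ : (s₁ - s₃) * (s₁ + s₃) * (s₁ * s₃ - 1) * (s₁ * s₃ + 1) ≠ 0)
    (hflex : ∀ δ₂ ∈ Set.Ioo (-π) π, ∃ δ₁ ∈ Set.Ioo (-π) π,
      Ddet 0 δ₁ δ₂ σ₁ σ₂ σ₃ = 0 ∧ Ddet 0 δ₁ δ₂ τ₁ τ₂ τ₃ = 0) :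
    (s₁ ^ 2 * s₂ * t₁ * t₂ ^ 2 - s₁ * s₂ ^ 2 * t₁ ^ 2 * t₂ - s₁ ^ 2 * s₂ * t₁ +
      s₁ * s₂ ^ 2 * t₂ + s₁ * t₁ ^ 2 * t₂ - s₂ * t₁ * t₂ ^ 2 - s₁ * t₂ + s₂ * t₁ = 0) ∧
    (s₁ ^ 2 * s₃ * t₁ * t₃ ^ 2 - s₁ * s₃ ^ 2 * t₁ ^ 2 * t₃ - s₁ ^ 2 * s₃ * t₁ +
      s₁ * s₃ ^ 2 * t₃ + s₁ * t₁ ^ 2 * t₃ - s₃ * t₁ * t₃ ^ 2 - s₁ * t₃ + s₃ * t₁ = 0) := by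
  -- individual nonvanishing of the half-angle variables
  have hs1ne : s₁ ≠ 0 := fun h => hs0 (by rw [h]; ring)
  have hs2ne : s₂ ≠ 0 := fun h => hs0 (by rw [h]; ring)
  have hs3ne : s₃ ≠ 0 := fun h => hs0 (by rw [h]; ring)
  have ht1ne : t₁ ≠ 0 := fun h => ht0 (by rw [h]; ring)
  have ht2ne : t₂ ≠ 0 := fun h => ht0 (by rw [h]; ring)
  have ht3ne : t₃ ≠ 0 := fun h => ht0 (by rw [h]; ring)
  -- half-angle expressions for all six angles
  obtain ⟨Sσ₁, Cσ₁, Nσ₁⟩ := half_aux σ₁ s₁ hs₁ hs1ne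
  obtain ⟨Sσ₂, Cσ₂, Nσ₂⟩ := half_aux σ₂ s₂ hs₂ hs2ne
  obtain ⟨Sσ₃, Cσ₃, Nσ₃⟩ := half_aux σ₃ s₃ hs₃ hs3ne
  obtain ⟨Sτ₁, Cτ₁, Nτ₁⟩ := half_aux τ₁ t₁ ht₁ ht1ne
  obtain ⟨Sτ₂, Cτ₂, Nτ₂⟩ := half_aux τ₂ t₂ ht₂ ht2ne
  obtain ⟨Sτ₃, Cτ₃, Nτ₃⟩ := half_aux τ₃ t₃ ht₃ ht3ne
  -- nondegeneracy in trigonometric form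
  obtain ⟨hm12, hp12⟩ := nd_aux τ₁ τ₂ t₁ t₂ Sτ₁ Cτ₁ Sτ₂ Cτ₂ ht₁₂
  obtain ⟨hm13, hp13⟩ := nd_aux τ₁ τ₃ t₁ t₃ Sτ₁ Cτ₁ Sτ₃ Cτ₃ ht₁₃
  -- apply the flexibility hypothesis at δ₂ = π/2 and δ₂ = π/3
  have hpi := Real.pi_pos
  have mem1 : (π/2) ∈ Set.Ioo (-π) π := ⟨by linarith, by linarith⟩
  have mem2 : (π/3) ∈ Set.Ioo (-π) π := ⟨by linarith, by linarith⟩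
  obtain ⟨δ, -, e1σ, e1τ⟩ := hflex (π/2) mem1
  obtain ⟨δ', -, e2σ, e2τ⟩ := hflex (π/3) mem2
  rw [Ddet_eq] at e1σ e1τ e2σ e2τ
  have hsin1 : Real.sin (π/2) ≠ 0 :=
    ne_of_gt (Real.sin_pos_of_pos_of_lt_pi (by linarith) (by linarith))
  have hsin2 : Real.sin (π/3) ≠ 0 :=
    ne_of_gt (Real.sin_pos_of_pos_of_lt_pi (by linarith) (by linarith))
  have E1 := elim_aux
    (Real.cos σ₁ * Real.sin σ₂ * Real.sin σ₃)
    (Real.sin σ₁ * Real.cos σ₂ * Real.sin σ₃)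
    (Real.sin σ₁ * Real.sin σ₂ * Real.cos σ₃)
    (Real.cos τ₁ * Real.sin τ₂ * Real.sin τ₃)
    (Real.sin τ₁ * Real.cos τ₂ * Real.sin τ₃)
    (Real.sin τ₁ * Real.sin τ₂ * Real.cos τ₃)
    (Real.cos δ) (Real.sin δ) (Real.cos (π/2)) (Real.sin (π/2)) hsin1
    (Real.cos_sq_add_sin_sq δ)
    (by linear_combination Real.sin_sq_add_cos_sq (π/2))
    (by linear_combination e1σ) (by linear_combination e1τ)
  have E2 := elim_aux
    (Real.cos σ₁ * Real.sin σ₂ * Real.sin σ₃)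
    (Real.sin σ₁ * Real.cos σ₂ * Real.sin σ₃)
    (Real.sin σ₁ * Real.sin σ₂ * Real.cos σ₃)
    (Real.cos τ₁ * Real.sin τ₂ * Real.sin τ₃)
    (Real.sin τ₁ * Real.cos τ₂ * Real.sin τ₃)
    (Real.sin τ₁ * Real.sin τ₂ * Real.cos τ₃)
    (Real.cos δ') (Real.sin δ') (Real.cos (π/3)) (Real.sin (π/3)) hsin2
    (Real.cos_sq_add_sin_sq δ')
    (by linear_combination Real.sin_sq_add_cos_sq (π/3))
    (by linear_combination e2σ) (by linear_combination e2τ)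
  rw [Real.cos_pi_div_two] at E1
  rw [Real.cos_pi_div_three] at E2
  -- the two relations
  set U := Real.cos σ₁ * Real.sin σ₂ * Real.sin τ₁ * Real.cos τ₂
    - Real.sin σ₁ * Real.cos σ₂ * Real.cos τ₁ * Real.sin τ₂ with hUdef
  set V := Real.cos τ₁ * Real.sin σ₁ * (Real.cos σ₃ * Real.sin τ₃)
    - Real.cos σ₁ * Real.sin τ₁ * (Real.cos τ₃ * Real.sin σ₃) with hVdef
  set W := Real.cos τ₂ * Real.sin σ₂ * (Real.cos σ₃ * Real.sin τ₃)
    - Real.cos σ₂ * Real.sin τ₂ * (Real.cos τ₃ * Real.sin σ₃) with hWdef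
  have keyE0 : (Real.sin σ₃ * Real.sin τ₃ * U)^2 + (Real.sin σ₂ * Real.sin τ₂ * V)^2
      = (Real.sin σ₁ * Real.sin τ₁ * W)^2 := by
    rw [hUdef, hVdef, hWdef]; linear_combination E1
  have keyPQ : (Real.sin σ₃ * Real.sin τ₃ * Real.sin σ₂ * Real.sin τ₂) * (U * V) = 0 := by
    rw [hUdef, hVdef]; linear_combination E2 - E1
  have hUV : U * V = 0 :=
    (mul_eq_zero.mp keyPQ).resolve_left
      (mul_ne_zero (mul_ne_zero (mul_ne_zero Nσ₃ Nτ₃) Nσ₂) Nτ₂)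
  -- in either case, both U = 0 and V = 0
  have hUV0 : U = 0 ∧ V = 0 := by
    rcases mul_eq_zero.mp hUV with hU | hV
    · refine ⟨hU, ?_⟩
      refine cancel_aux (Real.cos σ₁) (Real.sin σ₁) (Real.cos τ₁) (Real.sin τ₁)
        (Real.cos σ₂) (Real.sin σ₂) (Real.cos τ₂) (Real.sin τ₂)
        (Real.cos σ₃ * Real.sin τ₃) (Real.cos τ₃ * Real.sin σ₃) V W
        hVdef hWdef (by linear_combination hU) ?_ Nσ₁ Nσ₂ hp12 hm12
      linear_combination keyE0 - (Real.sin σ₃ * Real.sin τ₃)^2 * U * hU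
    · refine ⟨?_, hV⟩
      have hnu := cancel_aux (Real.cos σ₁) (Real.sin σ₁) (Real.cos τ₁) (Real.sin τ₁)
        (Real.cos σ₃) (Real.sin σ₃) (Real.cos τ₃) (Real.sin τ₃)
        (Real.cos σ₂ * Real.sin τ₂) (Real.cos τ₂ * Real.sin σ₂)
        (Real.cos τ₁ * Real.sin σ₁ * (Real.cos σ₂ * Real.sin τ₂)
          - Real.cos σ₁ * Real.sin τ₁ * (Real.cos τ₂ * Real.sin σ₂))
        (Real.cos τ₃ * Real.sin σ₃ * (Real.cos σ₂ * Real.sin τ₂)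
          - Real.cos σ₃ * Real.sin τ₃ * (Real.cos τ₂ * Real.sin σ₂))
        rfl rfl (by linear_combination -hV)
        (by linear_combination keyE0 - (Real.sin σ₂ * Real.sin τ₂)^2 * V * hV)
        Nσ₁ Nσ₃ hp13 hm13
      rw [hUdef]
      linear_combination -hnu
  obtain ⟨hU0, hV0⟩ := hUV0
  -- translate back to the half-angle variables
  have hden2 : ((1+s₁^2)*(1+s₂^2)*(1+t₁^2)*(1+t₂^2) : ℝ) ≠ 0 := by positivity
  have hden3 : ((1+s₁^2)*(1+s₃^2)*(1+t₁^2)*(1+t₃^2) : ℝ) ≠ 0 := by positivity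
  have hd1 : ((1:ℝ)+s₁^2) ≠ 0 := by positivity
  have hd2 : ((1:ℝ)+s₂^2) ≠ 0 := by positivity
  have hd3 : ((1:ℝ)+s₃^2) ≠ 0 := by positivity
  have hd4 : ((1:ℝ)+t₁^2) ≠ 0 := by positivity
  have hd5 : ((1:ℝ)+t₂^2) ≠ 0 := by positivity
  have hd6 : ((1:ℝ)+t₃^2) ≠ 0 := by positivity
  constructor
  · have key12 : U = 4*((1-s₁^2)*s₂*t₁*(1-t₂^2) - s₁*(1-s₂^2)*(1-t₁^2)*t₂)
        / ((1+s₁^2)*(1+s₂^2)*(1+t₁^2)*(1+t₂^2)) := by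
      rw [hUdef, Cσ₁, Sσ₂, Sτ₁, Cτ₂, Sσ₁, Cσ₂, Cτ₁, Sτ₂]
      field_simp
      ring
    rw [key12] at hU0
    have hnum := (div_eq_zero_iff.mp hU0).resolve_right hden2
    linear_combination hnum / 4
  · have key13 : V = 4*((1-t₁^2)*s₁*(1-s₃^2)*t₃ - (1-s₁^2)*t₁*(1-t₃^2)*s₃)
        / ((1+s₁^2)*(1+s₃^2)*(1+t₁^2)*(1+t₃^2)) := by
      rw [hVdef, Cτ₁, Sσ₁, Cσ₃, Sτ₃, Cσ₁, Sτ₁, Cτ₃, Sσ₃]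
      field_simp
      ring
    rw [key13] at hV0
    have hnum := (div_eq_zero_iff.mp hV0).resolve_right hden3
    linear_combination -hnum / 4

end
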